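/- The ring $\mathbb{R}[a,b]/(a^2+b^2-1)$ is not a unique factorization domain. -/

import Mathlib

noncomputable section Circle

open Polynomial AdjoinRoot

namespace CircleNotUFD

/-- The base ring `ℝ[X]`. -/
abbrev A : Type := Polynomial ℝ

/-- `d = 1 - X²`. -/
def d : A := 1 - Polynomial.X ^ 2

/-- `f = Y² - (1 - X²)` as a polynomial in `Y` over `ℝ[X]`. -/
def f : Polynomial A := Polynomial.X ^ 2 - Polynomial.C d

/-- The quadratic extension `ℝ[X][√(1-X²)]`. -/
abbrev S : Type := AdjoinRoot f

lemma f_monic : f.Monic := monic_X_pow_sub_C d (two_ne_zero)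

lemma f_degree : f.degree = 2 := degree_X_pow_sub_C (by norm_num) d

/-- Every element of `S` has a representation `p + q √(1-X²)`. -/
lemma exists_rep (s : S) : ∃ p q : A, s = mk f (C p + C q * X) := by
  obtain ⟨P, rfl⟩ := mk_surjective (g := f) s
  refine ⟨(P %ₘ f).coeff 0, (P %ₘ f).coeff 1, ?_⟩
  have h1 : mk f P = mk f (P %ₘ f) := by
    conv_lhs => rw [← modByMonic_add_div P f]
    rw [map_add, map_mul, mk_self, zero_mul, add_zero]
  have h2 : (P %ₘ f).degree ≤ 1 := by
    have := degree_modByMonic_lt P f_monic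
    rw [f_degree] at this
    exact Order.le_of_lt_succ (by exact_mod_cast this)
  rw [h1]
  refine congrArg (mk f) ?_
  conv_lhs => rw [eq_X_add_C_of_degree_le_one h2]
  ring

lemma rep_zero {p q : A} (h : mk f (C p + C q * X) = 0) : p = 0 ∧ q = 0 := by
  have hd : f ∣ C p + C q * X := mk_eq_zero.mp h
  have hz : C p + C q * X = 0 := by
    by_contra hne
    have hle := Polynomial.degree_le_of_dvd hd hne
    have h2 : (C p + C q * X : Polynomial A).degree ≤ 1 := by
      refine (degree_add_le _ _).trans (max_le (degree_C_le.trans (by norm_num)) ?_)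
      exact (degree_mul_le _ _).trans (by
        simpa using add_le_add degree_C_le (le_of_eq (degree_X (R := A))))
    rw [f_degree] at hle
    exact absurd (hle.trans h2) (by norm_num)
  constructor
  · have := congrArg (fun P => Polynomial.coeff P 0) hz
    simpa using this
  · have := congrArg (fun P => Polynomial.coeff P 1) hz
    simpa using this

lemma rep_unique {p q r s : A} (h : mk f (C p + C q * X) = mk f (C r + C s * X)) :
    p = r ∧ q = s := by
  have h0 : mk f (C (p - r) + C (q - s) * X) = 0 := by
    have : (C (p - r) + C (q - s) * X : Polynomial A)
        = (C p + C q * X) - (C r + C s * X) := by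
      simp only [map_sub]; ring
    rw [this, map_sub, h, sub_self]
  obtain ⟨h1, h2⟩ := rep_zero h0
  exact ⟨sub_eq_zero.mp h1, sub_eq_zero.mp h2⟩

lemma mul_rep (p q r s : A) :
    mk f (C p + C q * X) * mk f (C r + C s * X)
      = mk f (C (p * r + d * q * s) + C (p * s + q * r) * X) := by
  rw [← map_mul]
  refine mk_eq_mk.mpr ⟨C (q * s), ?_⟩
  simp only [f, map_add, map_mul]
  ring

/-- The norm form. -/
def nrm (p q : A) : A := p * p - d * q * q

lemma nrm_mul (p q r s : A) :
    nrm (p * r + d * q * s) (p * s + q * r) = nrm p q * nrm r s := by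
  unfold nrm; ring

lemma pos_add {u v : A} (hu : 0 < u.leadingCoeff) (hv : 0 < v.leadingCoeff) :
    (u + v).natDegree = max u.natDegree v.natDegree ∧ u + v ≠ 0 := by
  have hcu : 0 ≤ u.coeff (max u.natDegree v.natDegree) := by
    rcases lt_or_eq_of_le (le_max_left u.natDegree v.natDegree) with h | h
    · rw [coeff_eq_zero_of_natDegree_lt h]
    · rw [← h]; exact le_of_lt hu
  have hcv : 0 ≤ v.coeff (max u.natDegree v.natDegree) := by
    rcases lt_or_eq_of_le (le_max_right u.natDegree v.natDegree) with h | h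
    · rw [coeff_eq_zero_of_natDegree_lt h]
    · rw [← h]; exact le_of_lt hv
  have hpos : 0 < (u + v).coeff (max u.natDegree v.natDegree) := by
    rw [coeff_add]
    rcases le_total u.natDegree v.natDegree with h | h
    · have h1 : max u.natDegree v.natDegree = v.natDegree := max_eq_right h
      have : 0 < v.coeff (max u.natDegree v.natDegree) := by rw [h1]; exact hv
      linarith
    · have h1 : max u.natDegree v.natDegree = u.natDegree := max_eq_left h
      have : 0 < u.coeff (max u.natDegree v.natDegree) := by rw [h1]; exact hu
      linarith
  have hne : u + v ≠ 0 := fun h => by simp [h] at hpos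
  refine ⟨le_antisymm ((natDegree_add_le u v).trans le_rfl) ?_, hne⟩
  exact le_natDegree_of_ne_zero (ne_of_gt hpos)

lemma nrm_split (p q : A) : nrm p q = p * p + (Polynomial.X ^ 2 - 1) * (q * q) := by
  unfold nrm d; ring

lemma natDegree_X_sq_sub_one : (Polynomial.X ^ 2 - 1 : A).natDegree = 2 := by
  have : (Polynomial.X ^ 2 - 1 : A) = Polynomial.X ^ 2 - Polynomial.C 1 := by simp
  rw [this, natDegree_X_pow_sub_C]

lemma X_sq_sub_one_ne : (Polynomial.X ^ 2 - 1 : A) ≠ 0 := by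
  intro h
  have := natDegree_X_sq_sub_one
  rw [h] at this
  simp at this

lemma leadingCoeff_X_sq_sub_one : (Polynomial.X ^ 2 - 1 : A).leadingCoeff = 1 := by
  have : (Polynomial.X ^ 2 - 1 : A) = Polynomial.X ^ 2 - Polynomial.C 1 := by simp
  rw [this]
  exact (monic_X_pow_sub_C (1 : ℝ) two_ne_zero).leadingCoeff

lemma nrm_ne_and_even {p q : A} (h : ¬(p = 0 ∧ q = 0)) :
    nrm p q ≠ 0 ∧ Even (nrm p q).natDegree := by
  rw [nrm_split]
  by_cases hq : q = 0
  · have hp : p ≠ 0 := fun hp => h ⟨hp, hq⟩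
    subst hq
    simp only [mul_zero, add_zero]
    exact ⟨mul_ne_zero hp hp, by rw [natDegree_mul hp hp]; exact ⟨p.natDegree, rfl⟩⟩
  · have hv : ((Polynomial.X ^ 2 - 1 : A) * (q * q)).natDegree = 2 + 2 * q.natDegree := by
      rw [natDegree_mul X_sq_sub_one_ne (mul_ne_zero hq hq), natDegree_X_sq_sub_one,
        natDegree_mul hq hq]
      ring
    have hvlc : 0 < ((Polynomial.X ^ 2 - 1 : A) * (q * q)).leadingCoeff := by
      rw [leadingCoeff_mul, leadingCoeff_X_sq_sub_one, one_mul, leadingCoeff_mul]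
      exact mul_self_pos.mpr (leadingCoeff_ne_zero.mpr hq)
    by_cases hp : p = 0
    · subst hp
      simp only [mul_zero, zero_add, zero_mul]
      refine ⟨mul_ne_zero X_sq_sub_one_ne (mul_ne_zero hq hq), ?_⟩
      rw [hv]; exact ⟨1 + q.natDegree, by ring⟩
    · have hulc : 0 < (p * p).leadingCoeff := by
        rw [leadingCoeff_mul]
        exact mul_self_pos.mpr (leadingCoeff_ne_zero.mpr hp)
      obtain ⟨hdeg, hne⟩ := pos_add hulc hvlc
      refine ⟨hne, ?_⟩
      rw [hdeg, natDegree_mul hp hp, hv]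
      rcases max_cases (p.natDegree + p.natDegree) (2 + 2 * q.natDegree) with ⟨h1, _⟩ | ⟨h1, _⟩
      · rw [h1]; exact ⟨p.natDegree, rfl⟩
      · rw [h1]; exact ⟨1 + q.natDegree, by ring⟩

lemma nrm_ne {p q : A} (h : ¬(p = 0 ∧ q = 0)) : nrm p q ≠ 0 := (nrm_ne_and_even h).1

instance : Nontrivial S := by
  refine ⟨1, 0, fun h => ?_⟩
  have h1 : mk f (C 1 + C 0 * X) = 0 := by simpa using h
  simpa using (rep_zero h1).1

instance : IsDomain S := by
  have : NoZeroDivisors S := by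
    constructor
    intro u v huv
    obtain ⟨p, q, rfl⟩ := exists_rep u
    obtain ⟨r, s, rfl⟩ := exists_rep v
    rw [mul_rep] at huv
    have h0 : mk f (C (0 : A) + C (0 : A) * X) = 0 := by simp
    obtain ⟨h1, h2⟩ := rep_unique (huv.trans h0.symm)
    have hnn : nrm p q * nrm r s = 0 := by
      rw [← nrm_mul, h1, h2]
      unfold nrm; ring
    rcases mul_eq_zero.mp hnn with h | h
    · left
      by_contra hne
      have hb : ¬(p = 0 ∧ q = 0) := by
        intro ⟨hp, hq⟩; exact hne (by rw [hp, hq]; simp)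
      exact nrm_ne hb h
    · right
      by_contra hne
      have hb : ¬(r = 0 ∧ s = 0) := by
        intro ⟨hp, hq⟩; exact hne (by rw [hp, hq]; simp)
      exact nrm_ne hb h
  exact NoZeroDivisors.to_isDomain S

lemma isUnit_of_nrm_const {p q : A} (h : (nrm p q).natDegree = 0) (hne : nrm p q ≠ 0) :
    IsUnit (mk f (C p + C q * X)) := by
  obtain ⟨c, hc⟩ := natDegree_eq_zero.mp h
  have hcne : c ≠ 0 := fun h0 => hne (by rw [← hc, h0, map_zero])
  have key : mk f (C p + C q * X) * mk f (C p + C (-q) * X) = mk f (C (nrm p q)) := by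
    rw [mul_rep]
    congr 1
    have e1 : p * p + d * q * (-q) = nrm p q := by unfold nrm; ring
    have e2 : p * (-q) + q * p = 0 := by ring
    rw [e1, e2]; simp
  have hinv : mk f (C (nrm p q)) * mk f (C (Polynomial.C c⁻¹)) = 1 := by
    rw [← map_mul, ← hc, ← Polynomial.C_mul, ← Polynomial.C_mul,
      mul_inv_cancel₀ hcne]
    simp
  have hu : IsUnit (mk f (C p + C q * X) * mk f (C p + C (-q) * X)) := by
    rw [key]
    exact IsUnit.of_mul_eq_one _ hinv
  exact isUnit_of_mul_isUnit_left hu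

lemma root_rep : root f = mk f (C (0 : A) + C (1 : A) * X) := by
  rw [← mk_X]; congr 1; simp

/-- The key irreducibility-type fact in `S`: any factorization of `√(1-X²)` has a unit factor. -/
lemma mul_eq_root {u v : S} (huv : u * v = root f) : IsUnit u ∨ IsUnit v := by
  obtain ⟨p, q, rfl⟩ := exists_rep u
  obtain ⟨r, s, rfl⟩ := exists_rep v
  rw [mul_rep, root_rep] at huv
  obtain ⟨h1, h2⟩ := rep_unique huv
  have hn : nrm p q * nrm r s = Polynomial.X ^ 2 - 1 := by
    rw [← nrm_mul, h1, h2]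
    unfold nrm d; ring
  have hne1 : nrm p q ≠ 0 := fun h => X_sq_sub_one_ne (by rw [← hn, h, zero_mul])
  have hne2 : nrm r s ≠ 0 := fun h => X_sq_sub_one_ne (by rw [← hn, h, mul_zero])
  have hb1 : ¬(p = 0 ∧ q = 0) := fun ⟨hp, hq⟩ => hne1 (by unfold nrm; rw [hp, hq]; ring)
  have hb2 : ¬(r = 0 ∧ s = 0) := fun ⟨hp, hq⟩ => hne2 (by unfold nrm; rw [hp, hq]; ring)
  have hdeg : (nrm p q).natDegree + (nrm r s).natDegree = 2 := by
    rw [← natDegree_mul hne1 hne2, hn, natDegree_X_sq_sub_one]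
  obtain ⟨e1p, e1⟩ := (nrm_ne_and_even hb1).2
  obtain ⟨e2p, e2⟩ := (nrm_ne_and_even hb2).2
  have : (nrm p q).natDegree = 0 ∨ (nrm r s).natDegree = 0 := by omega
  rcases this with h | h
  · exact Or.inl (isUnit_of_nrm_const h hne1)
  · exact Or.inr (isUnit_of_nrm_const h hne2)

/-! ### The circle ring and its map to `S` -/

/-- The defining ideal. -/
def I : Ideal (MvPolynomial (Fin 2) ℝ) :=
  Ideal.span {(MvPolynomial.X 0 : MvPolynomial (Fin 2) ℝ) ^ 2 + MvPolynomial.X 1 ^ 2 - 1}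

/-- The circle ring. -/
abbrev Q : Type := MvPolynomial (Fin 2) ℝ ⧸ I

def φ₀ : MvPolynomial (Fin 2) ℝ →+* S :=
  MvPolynomial.eval₂Hom ((AdjoinRoot.of f).comp Polynomial.C)
    ![AdjoinRoot.of f Polynomial.X, root f]

lemma root_sq : (root f) ^ 2 = AdjoinRoot.of f d := by
  have h : mk f (Polynomial.X ^ 2 - Polynomial.C d) = 0 := mk_self
  rw [map_sub, map_pow, mk_X, mk_C, sub_eq_zero] at h
  exact h

lemma φ₀_gen : φ₀ ((MvPolynomial.X 0 : MvPolynomial (Fin 2) ℝ) ^ 2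
    + MvPolynomial.X 1 ^ 2 - 1) = 0 := by
  have h0 : φ₀ (MvPolynomial.X 0) = AdjoinRoot.of f Polynomial.X := by
    simp [φ₀]
  have h1 : φ₀ (MvPolynomial.X 1) = root f := by
    simp [φ₀]
  rw [map_sub, map_add, map_pow, map_pow, map_one, h0, h1, root_sq]
  have : AdjoinRoot.of f d = 1 - (AdjoinRoot.of f Polynomial.X) ^ 2 := by
    rw [d, map_sub, map_one, map_pow]
  rw [this]; ring

def φ : Q →+* S :=
  Ideal.Quotient.lift I φ₀ (by
    intro a ha
    rw [I, Ideal.mem_span_singleton] at ha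
    obtain ⟨c, rfl⟩ := ha
    rw [map_mul, φ₀_gen, zero_mul])

def xQ : Q := Ideal.Quotient.mk I (MvPolynomial.X 0)
def yQ : Q := Ideal.Quotient.mk I (MvPolynomial.X 1)

lemma relQ : xQ ^ 2 + yQ ^ 2 - 1 = 0 := by
  have : Ideal.Quotient.mk I ((MvPolynomial.X 0 : MvPolynomial (Fin 2) ℝ) ^ 2
      + MvPolynomial.X 1 ^ 2 - 1) = 0 :=
    Ideal.Quotient.eq_zero_iff_mem.mpr (Ideal.subset_span rfl)
  simpa [xQ, yQ, map_sub, map_add, map_pow, map_one] using this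

def h₀ : A →+* Q :=
  Polynomial.eval₂RingHom ((Ideal.Quotient.mk I).comp MvPolynomial.C) xQ

def ψ : S →+* Q :=
  AdjoinRoot.lift h₀ yQ (by
    rw [f]
    simp only [eval₂_sub, eval₂_pow, eval₂_X, eval₂_C]
    have hd : h₀ d = 1 - xQ ^ 2 := by
      rw [d]
      simp [h₀]
    rw [hd]
    linear_combination relQ)

lemma ψ_of (z : A) : ψ (AdjoinRoot.of f z) = h₀ z := by
  rw [show AdjoinRoot.of f z = mk f (Polynomial.C z) from rfl, ψ, lift_mk, eval₂_C]

lemma ψ_comp_φ (t : Q) : ψ (φ t) = t := by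
  obtain ⟨m, rfl⟩ := Ideal.Quotient.mk_surjective t
  rw [φ, Ideal.Quotient.lift_mk]
  have : (ψ.comp φ₀) = Ideal.Quotient.mk I := by
    apply MvPolynomial.ringHom_ext
    · intro r
      simp only [RingHom.comp_apply, φ₀, MvPolynomial.eval₂Hom_C]
      rw [ψ_of]
      simp [h₀]
    · intro i
      fin_cases i
      · simp only [RingHom.comp_apply, φ₀]
        rw [MvPolynomial.eval₂Hom_X']
        show ψ (AdjoinRoot.of f Polynomial.X) = _
        rw [ψ_of]
        simp [h₀, xQ]
      · simp only [RingHom.comp_apply, φ₀]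
        rw [MvPolynomial.eval₂Hom_X']
        show ψ (root f) = _
        rw [ψ, lift_root]
        simp [yQ]
  exact RingHom.congr_fun this m

lemma φ_injective : Function.Injective φ := by
  intro a b hab
  have := congrArg ψ hab
  rwa [ψ_comp_φ, ψ_comp_φ] at this

instance Q_domain : IsDomain Q := Function.Injective.isDomain φ φ_injective

lemma φ_yQ : φ yQ = root f := by
  rw [yQ, φ, Ideal.Quotient.lift_mk]
  simp [φ₀]

/-- Evaluation at a point of the circle. -/
def ev (a b : ℝ) (hab : a ^ 2 + b ^ 2 = 1) : Q →+* ℝ :=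
  Ideal.Quotient.lift I (MvPolynomial.eval ![a, b]) (by
    intro c hc
    rw [I, Ideal.mem_span_singleton] at hc
    obtain ⟨c, rfl⟩ := hc
    rw [map_mul]
    have : MvPolynomial.eval ![a, b] ((MvPolynomial.X 0 : MvPolynomial (Fin 2) ℝ) ^ 2
        + MvPolynomial.X 1 ^ 2 - 1) = 0 := by
      have : MvPolynomial.eval ![a, b] ((MvPolynomial.X 0 : MvPolynomial (Fin 2) ℝ) ^ 2
          + MvPolynomial.X 1 ^ 2 - 1) = a ^ 2 + b ^ 2 - 1 := by simp
      rw [this, hab]; ring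
    rw [this, zero_mul])

lemma ev_xQ (a b : ℝ) (hab : a ^ 2 + b ^ 2 = 1) : ev a b hab xQ = a := by
  rw [xQ, ev, Ideal.Quotient.lift_mk]; simp

lemma ev_yQ (a b : ℝ) (hab : a ^ 2 + b ^ 2 = 1) : ev a b hab yQ = b := by
  rw [yQ, ev, Ideal.Quotient.lift_mk]; simp

lemma circle_pt1 : (1 : ℝ) ^ 2 + (0 : ℝ) ^ 2 = 1 := by norm_num
lemma circle_ptm1 : (-1 : ℝ) ^ 2 + (0 : ℝ) ^ 2 = 1 := by norm_num

lemma yQ_not_unit : ¬ IsUnit yQ := by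
  intro h
  have := h.map (ev 1 0 circle_pt1)
  rw [ev_yQ] at this
  exact not_isUnit_zero this

lemma yQ_irreducible : Irreducible yQ := by
  refine ⟨yQ_not_unit, fun u v huv => ?_⟩
  have : φ u * φ v = root f := by rw [← map_mul, ← huv, φ_yQ]
  rcases mul_eq_root this with h | h
  · left
    have := h.map ψ
    rwa [ψ_comp_φ] at this
  · right
    have := h.map ψ
    rwa [ψ_comp_φ] at this

lemma yQ_dvd : yQ ∣ (1 - xQ) * (1 + xQ) := ⟨yQ, by linear_combination -relQ⟩

lemma not_dvd_left : ¬ yQ ∣ (1 - xQ) := by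
  rintro ⟨c, hc⟩
  have := congrArg (ev (-1) 0 circle_ptm1) hc
  rw [map_mul, map_sub, map_one, ev_xQ, ev_yQ, zero_mul] at this
  norm_num at this

lemma not_dvd_right : ¬ yQ ∣ (1 + xQ) := by
  rintro ⟨c, hc⟩
  have := congrArg (ev 1 0 circle_pt1) hc
  rw [map_mul, map_add, map_one, ev_xQ, ev_yQ, zero_mul] at this
  norm_num at this

lemma Q_not_UFD : ¬ UniqueFactorizationMonoid Q := by
  intro hufd
  have hprime : Prime yQ :=
    UniqueFactorizationMonoid.irreducible_iff_prime.mp yQ_irreducible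
  rcases hprime.2.2 _ _ yQ_dvd with h | h
  · exact not_dvd_left h
  · exact not_dvd_right h

end CircleNotUFD

end Circle

theorem stmt_11 :
    ∃ hd : IsDomain (MvPolynomial (Fin 2) ℝ ⧸
        Ideal.span {(MvPolynomial.X 0 : MvPolynomial (Fin 2) ℝ) ^ 2 +
          MvPolynomial.X 1 ^ 2 - 1}),
      ¬ (letI := hd;
        UniqueFactorizationMonoid (MvPolynomial (Fin 2) ℝ ⧸
          Ideal.span {(MvPolynomial.X 0 : MvPolynomial (Fin 2) ℝ) ^ 2 +
            MvPolynomial.X 1 ^ 2 - 1})) := by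
  exact ⟨CircleNotUFD.Q_domain, CircleNotUFD.Q_not_UFD⟩
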